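/- Let f̃, g̃ ∈ ℝ^{n+1} be written as f̃ = (f_{[n]}, f_{n+1}) and g̃ = (g_{[n]}, g_{n+1}) with f_{[n]}, g_{[n]} ∈ ℝ^n and f_{n+1} ≠ 0, g_{n+1} ≠ 0. Then ‖f_{[n]}/f_{n+1} − g_{[n]}/g_{n+1}‖₂ ≤ (‖f̃‖₂ ‖g̃‖₂ / (|f_{n+1}| |g_{n+1}|)) · ‖f̃/‖f̃‖₂ − g̃/‖g̃‖₂‖₂. -/

import Mathlib

noncomputable def norm2 {ι : Type*} [Fintype ι] (x : ι → ℝ) : ℝ :=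
  Real.sqrt (∑ i, x i ^ 2)

/-- Lemma (norm comparison after dehomogenization): for f̃ = (f, fc), g̃ = (g, gc)
with nonzero last coordinates,
‖f/fc − g/gc‖₂ ≤ (‖f̃‖₂‖g̃‖₂/(|fc||gc|)) ‖f̃/‖f̃‖₂ − g̃/‖g̃‖₂‖₂. -/
theorem stmt0 (n : ℕ) (f g : Fin n → ℝ) (fc gc : ℝ) (hfc : fc ≠ 0) (hgc : gc ≠ 0) :
    norm2 (fun i => f i / fc - g i / gc) ≤
      (norm2 (Fin.snoc f fc : Fin (n + 1) → ℝ) * norm2 (Fin.snoc g gc : Fin (n + 1) → ℝ) /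
        (|fc| * |gc|)) *
      norm2 (fun i : Fin (n + 1) =>
        (Fin.snoc f fc : Fin (n + 1) → ℝ) i / norm2 (Fin.snoc f fc : Fin (n + 1) → ℝ) -
        (Fin.snoc g gc : Fin (n + 1) → ℝ) i / norm2 (Fin.snoc g gc : Fin (n + 1) → ℝ)) := by
  set F : Fin (n + 1) → ℝ := Fin.snoc f fc with hF
  set G : Fin (n + 1) → ℝ := Fin.snoc g gc with hG
  set A := ∑ i, f i ^ 2 with hAdef
  set B := ∑ i, g i ^ 2 with hBdef
  set T := ∑ i, f i * g i with hTdef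
  have hA0 : 0 ≤ A := Finset.sum_nonneg fun i _ => sq_nonneg _
  have hB0 : 0 ≤ B := Finset.sum_nonneg fun i _ => sq_nonneg _
  have hFs : ∑ i, F i ^ 2 = A + fc ^ 2 := by
    rw [Fin.sum_univ_castSucc]; simp [hF]; rfl
  have hGs : ∑ i, G i ^ 2 = B + gc ^ 2 := by
    rw [Fin.sum_univ_castSucc]; simp [hG]; rfl
  have hApos : 0 < A + fc ^ 2 := by positivity
  have hBpos : 0 < B + gc ^ 2 := by positivity
  set a := norm2 F with hadef
  set b := norm2 G with hbdef
  have ha : a = Real.sqrt (A + fc ^ 2) := by rw [hadef, norm2, hFs]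
  have hb : b = Real.sqrt (B + gc ^ 2) := by rw [hbdef, norm2, hGs]
  have hapos : 0 < a := by rw [ha]; exact Real.sqrt_pos.mpr hApos
  have hbpos : 0 < b := by rw [hb]; exact Real.sqrt_pos.mpr hBpos
  have ha2 : a ^ 2 = A + fc ^ 2 := by rw [ha, Real.sq_sqrt hApos.le]
  have hb2 : b ^ 2 = B + gc ^ 2 := by rw [hb, Real.sq_sqrt hBpos.le]
  set L := ∑ i, (gc * f i - fc * g i) ^ 2 with hLdef
  set Q := ∑ i, (b * F i - a * G i) ^ 2 with hQdef
  have hL0 : 0 ≤ L := Finset.sum_nonneg fun i _ => sq_nonneg _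
  have hQ0 : 0 ≤ Q := Finset.sum_nonneg fun i _ => sq_nonneg _
  -- rewrite LHS
  have hLHS : norm2 (fun i => f i / fc - g i / gc) = Real.sqrt L / |fc * gc| := by
    rw [norm2]
    have h1 : ∀ i ∈ Finset.univ, (f i / fc - g i / gc) ^ 2
        = (gc * f i - fc * g i) ^ 2 / (fc * gc) ^ 2 := by
      intro i _
      field_simp
    rw [Finset.sum_congr rfl h1, ← Finset.sum_div, Real.sqrt_div hL0,
      Real.sqrt_sq_eq_abs]
  -- rewrite the normalized-difference norm
  have hRHSn : norm2 (fun i : Fin (n + 1) => F i / a - G i / b) = Real.sqrt Q / (a * b) := by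
    rw [norm2]
    have h1 : ∀ i ∈ Finset.univ, (F i / a - G i / b) ^ 2
        = (b * F i - a * G i) ^ 2 / (a * b) ^ 2 := by
      intro i _
      field_simp
    rw [Finset.sum_congr rfl h1, ← Finset.sum_div, Real.sqrt_div hQ0,
      Real.sqrt_sq_eq_abs, abs_of_pos (mul_pos hapos hbpos)]
  -- expand L and Q
  have hL : L = gc ^ 2 * A - 2 * (fc * gc) * T + fc ^ 2 * B := by
    have h1 : ∀ i ∈ Finset.univ, (gc * f i - fc * g i) ^ 2
        = gc ^ 2 * f i ^ 2 - 2 * (fc * gc) * (f i * g i) + fc ^ 2 * g i ^ 2 := by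
      intro i _; ring
    rw [hLdef, Finset.sum_congr rfl h1]
    simp only [Finset.sum_add_distrib, Finset.sum_sub_distrib, ← Finset.mul_sum]
    rfl
  have hQ : Q = b ^ 2 * A - 2 * (a * b) * (T + fc * gc) + a ^ 2 * B
      + (b * fc - a * gc) ^ 2 + 2 * (a * b) * (fc * gc) := by
    rw [hQdef, Fin.sum_univ_castSucc]
    have h1 : ∀ i ∈ Finset.univ, (b * F i.castSucc - a * G i.castSucc) ^ 2
        = b ^ 2 * f i ^ 2 - 2 * (a * b) * (f i * g i) + a ^ 2 * g i ^ 2 := by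
      intro i _
      simp [hF, hG]
      ring
    rw [Finset.sum_congr rfl h1]
    simp only [Finset.sum_add_distrib, Finset.sum_sub_distrib, ← Finset.mul_sum]
    simp [hF, hG]
    ring
  -- Cauchy–Schwarz
  have hCS : T ^ 2 ≤ A * B := Finset.sum_mul_sq_le_sq_mul_sq _ _ _
  -- key inequality
  have hkey : L ≤ Q := by
    nlinarith [sq_nonneg (a * b - fc * gc - T), hCS, ha2, hb2, sq_nonneg (b * fc - a * gc)]
  rw [hLHS, hRHSn]
  have hd : 0 < |fc * gc| := abs_pos.mpr (mul_ne_zero hfc hgc)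
  have heq : a * b / (|fc| * |gc|) * (Real.sqrt Q / (a * b)) = Real.sqrt Q / |fc * gc| := by
    rw [abs_mul]
    field_simp
  rw [heq]
  gcongr
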